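/- Let λ > 0, ω = −1, and on ℝ define ν(t) = λ^{-1/2}(cosh t)^{-3/2} and κ(t) = (λ/4)^{1/2}(cosh t)^{3/2}. Then the function t ↦ 3ν(t)^{-2}κ(t)κ''(t) − 5ν(t)^{-2}κ'(t)² − 3ν(t)^{-3}ν'(t)κ(t)κ'(t) + 9ω κ(t)⁴ equals 9(λ/4)^{2/3} κ(t)^{8/3}, so that the equi-affine curvature κ_a(t) = (1/(9κ(t)^{8/3})) · (that expression) is the constant (λ/4)^{2/3}. -/

import Mathlib

open Real

/-- derivative of `cosh t ^ p` for real exponent `p`. -/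
lemma hasDerivAt_cosh_rpow (p t : ℝ) :
    HasDerivAt (fun s => Real.cosh s ^ p)
      (p * Real.cosh t ^ (p - 1) * Real.sinh t) t := by
  have h := (Real.hasDerivAt_rpow_const (x := Real.cosh t) (p := p)
      (Or.inl (Real.cosh_pos t).ne')).comp t (Real.hasDerivAt_cosh t)
  exact h

lemma rpow_half_pow (C : ℝ) (hC : 0 < C) (n : ℕ) :
    C ^ ((n : ℝ)/2) = (C ^ ((1:ℝ)/2)) ^ n := by
  rw [← Real.rpow_natCast (C ^ ((1:ℝ)/2)) n, ← Real.rpow_mul hC.le]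
  ring_nf

set_option maxHeartbeats 1000000

/-- Example (iii) of the paper: for `ν(t) = λ^{-1/2}(cosh t)^{-3/2}` and
`κ(t) = (λ/4)^{1/2}(cosh t)^{3/2}` with `λ > 0`, `ω = −1`, the expression
`3ν⁻²κκ'' − 5ν⁻²κ'² − 3ν⁻³ν'κκ' + 9ωκ⁴` equals `9(λ/4)^{2/3}κ^{8/3}`, so the
equi-affine curvature is the constant `(λ/4)^{2/3}`. -/
theorem stmt16 (l : ℝ) (hl : 0 < l) (ω : ℝ) (hω : ω = -1)
    (ν κ : ℝ → ℝ)
    (hν : ∀ t, ν t = l ^ (-(1 : ℝ)/2) * (Real.cosh t) ^ (-(3 : ℝ)/2))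
    (hκ : ∀ t, κ t = (l/4) ^ ((1 : ℝ)/2) * (Real.cosh t) ^ ((3 : ℝ)/2)) :
    ∀ t : ℝ,
      (3 * ν t ^ (-(2 : ℝ)) * κ t * deriv (deriv κ) t
          - 5 * ν t ^ (-(2 : ℝ)) * (deriv κ t) ^ 2
          - 3 * ν t ^ (-(3 : ℝ)) * deriv ν t * κ t * deriv κ t
          + 9 * ω * κ t ^ 4)
        = 9 * (l/4) ^ ((2 : ℝ)/3) * κ t ^ ((8 : ℝ)/3) ∧
      (1 / (9 * κ t ^ ((8 : ℝ)/3)))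
          * (3 * ν t ^ (-(2 : ℝ)) * κ t * deriv (deriv κ) t
              - 5 * ν t ^ (-(2 : ℝ)) * (deriv κ t) ^ 2
              - 3 * ν t ^ (-(3 : ℝ)) * deriv ν t * κ t * deriv κ t
              + 9 * ω * κ t ^ 4)
        = (l/4) ^ ((2 : ℝ)/3) := by
  have hl4 : (0:ℝ) < l/4 := by linarith
  have hcpos : (0:ℝ) < (l/4) ^ ((1:ℝ)/2) := Real.rpow_pos_of_pos hl4 _
  have hdpos : (0:ℝ) < l ^ (-(1:ℝ)/2) := Real.rpow_pos_of_pos hl _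
  set c : ℝ := (l/4) ^ ((1:ℝ)/2) with hc
  set d : ℝ := l ^ (-(1:ℝ)/2) with hd
  -- first derivative of κ
  have hκ' : ∀ s, deriv κ s = c * ((3:ℝ)/2 * Real.cosh s ^ ((3:ℝ)/2 - 1) * Real.sinh s) := by
    intro s
    have h1 := (hasDerivAt_cosh_rpow ((3:ℝ)/2) s).const_mul c
    have h2 : HasDerivAt κ
        (c * ((3:ℝ)/2 * Real.cosh s ^ ((3:ℝ)/2 - 1) * Real.sinh s)) s :=
      h1.congr_of_eventuallyEq (Filter.Eventually.of_forall fun x => (hκ x))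
    exact h2.deriv
  have hκ'1 : ∀ s, deriv κ s = c * ((3:ℝ)/2 * Real.cosh s ^ ((1:ℝ)/2) * Real.sinh s) := by
    intro s; rw [hκ' s]; norm_num
  -- second derivative of κ
  have hκ'' : ∀ s, deriv (deriv κ) s =
      c * ((3:ℝ)/2) * (((1:ℝ)/2 * Real.cosh s ^ ((1:ℝ)/2 - 1) * Real.sinh s) * Real.sinh s
        + Real.cosh s ^ ((1:ℝ)/2) * Real.cosh s) := by
    intro s
    have h1 := ((hasDerivAt_cosh_rpow ((1:ℝ)/2) s).mul (Real.hasDerivAt_sinh s)).const_mul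
      (c * ((3:ℝ)/2))
    have h2 : HasDerivAt (deriv κ)
        (c * ((3:ℝ)/2) * (((1:ℝ)/2 * Real.cosh s ^ ((1:ℝ)/2 - 1) * Real.sinh s) * Real.sinh s
          + Real.cosh s ^ ((1:ℝ)/2) * Real.cosh s)) s := by
      refine HasDerivAt.congr_of_eventuallyEq ?_
        (Filter.Eventually.of_forall fun x => (hκ'1 x))
      convert h1 using 2 with x
      rfl
      simp only [Pi.mul_apply]
      all_goals ring
    exact h2.deriv
  -- derivative of ν
  have hν' : ∀ s, deriv ν s = d * (-(3:ℝ)/2 * Real.cosh s ^ (-(3:ℝ)/2 - 1) * Real.sinh s) := by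
    intro s
    have h1 := (hasDerivAt_cosh_rpow (-(3:ℝ)/2) s).const_mul d
    have h2 : HasDerivAt ν
        (d * (-(3:ℝ)/2 * Real.cosh s ^ (-(3:ℝ)/2 - 1) * Real.sinh s)) s :=
      h1.congr_of_eventuallyEq (Filter.Eventually.of_forall fun x => (hν x))
    exact h2.deriv
  intro t
  have hC : 0 < Real.cosh t := Real.cosh_pos t
  have hupos : (0:ℝ) < Real.cosh t ^ ((1:ℝ)/2) := Real.rpow_pos_of_pos hC _
  set u : ℝ := Real.cosh t ^ ((1:ℝ)/2) with hu
  have hu2 : u ^ 2 = Real.cosh t := by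
    rw [hu, ← Real.rpow_natCast (Real.cosh t ^ ((1:ℝ)/2)) 2, ← Real.rpow_mul hC.le]
    norm_num
  -- express powers of cosh in terms of u
  have e32 : Real.cosh t ^ ((3:ℝ)/2) = u ^ 3 := by
    have h3 := rpow_half_pow (Real.cosh t) hC 3
    norm_num at h3; rw [h3]
  have en32 : Real.cosh t ^ (-(3:ℝ)/2) = (u ^ 3)⁻¹ := by
    rw [show (-(3:ℝ)/2) = -((3:ℝ)/2) by ring, Real.rpow_neg hC.le, e32]
  have en12 : Real.cosh t ^ ((1:ℝ)/2 - 1) = u⁻¹ := by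
    rw [show ((1:ℝ)/2 - 1) = -((1:ℝ)/2) by ring, Real.rpow_neg hC.le, hu]
  have en52 : Real.cosh t ^ (-(3:ℝ)/2 - 1) = (u ^ 5)⁻¹ := by
    have h5 := rpow_half_pow (Real.cosh t) hC 5
    norm_num at h5
    rw [show (-(3:ℝ)/2 - 1) = -((5:ℝ)/2) by ring, Real.rpow_neg hC.le, h5]
  -- ν t and its rpow powers
  have hνt : ν t = d * (u ^ 3)⁻¹ := by rw [hν t, en32]
  have hνtpos : 0 < ν t := by rw [hνt]; positivity
  have hνm2 : ν t ^ (-(2:ℝ)) = (ν t ^ 2)⁻¹ := by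
    rw [show (-(2:ℝ)) = -((2:ℕ):ℝ) by norm_num, Real.rpow_neg hνtpos.le, Real.rpow_natCast]
  have hνm3 : ν t ^ (-(3:ℝ)) = (ν t ^ 3)⁻¹ := by
    rw [show (-(3:ℝ)) = -((3:ℕ):ℝ) by norm_num, Real.rpow_neg hνtpos.le, Real.rpow_natCast]
  -- algebraic facts
  have hd2 : d ^ 2 = l⁻¹ := by
    rw [hd, ← Real.rpow_natCast (l ^ (-(1:ℝ)/2)) 2, ← Real.rpow_mul hl.le]
    norm_num [Real.rpow_neg_one]
  have hc2 : c ^ 2 = l / 4 := by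
    rw [hc, ← Real.rpow_natCast ((l/4) ^ ((1:ℝ)/2)) 2, ← Real.rpow_mul hl4.le]
    norm_num
  have A2 : (ν t ^ 2)⁻¹ = l * u ^ 6 := by
    rw [hνt, mul_pow, hd2, inv_pow, mul_inv, inv_inv, inv_inv]
    ring
  have A3 : (ν t ^ 3)⁻¹ * deriv ν t
      = l * u ^ 9 * (-(3:ℝ)/2 * (u ^ 5)⁻¹ * Real.sinh t) := by
    rw [hνt, hν' t, en52]
    have hl' : l = (d ^ 2)⁻¹ := by rw [hd2, inv_inv]
    rw [hl']
    field_simp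
  -- κ t
  have hκt : κ t = c * u ^ 3 := by rw [hκ t, e32]
  have hκtpos : 0 < κ t := by rw [hκt]; positivity
  -- κ t ^ (8/3)
  have hκ83 : κ t ^ ((8:ℝ)/3) = c ^ ((8:ℝ)/3) * u ^ 8 := by
    rw [hκt, Real.mul_rpow hcpos.le (by positivity)]
    congr 1
    rw [← Real.rpow_natCast u 3, ← Real.rpow_mul hupos.le, ← Real.rpow_natCast u 8]
    norm_num
  have hcc : (l/4) ^ ((2:ℝ)/3) * c ^ ((8:ℝ)/3) = (c ^ 2) ^ 2 := by
    rw [hc, ← Real.rpow_mul hl4.le, ← Real.rpow_add hl4,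
      ← Real.rpow_natCast ((l/4) ^ ((1:ℝ)/2)) 2, ← Real.rpow_mul hl4.le,
      ← Real.rpow_natCast ((l/4) ^ ((1:ℝ)/2 * (2:ℕ))) 2, ← Real.rpow_mul hl4.le]
    norm_num
  have hS : Real.sinh t ^ 2 = u ^ 4 - 1 := by
    have h := Real.cosh_sq t
    nlinarith [hu2]
  have hlc : l = 4 * c ^ 2 := by rw [hc2]; ring
  have key : (3 * ν t ^ (-(2 : ℝ)) * κ t * deriv (deriv κ) t
          - 5 * ν t ^ (-(2 : ℝ)) * (deriv κ t) ^ 2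
          - 3 * ν t ^ (-(3 : ℝ)) * deriv ν t * κ t * deriv κ t
          + 9 * ω * κ t ^ 4)
        = 9 * (l/4) ^ ((2 : ℝ)/3) * κ t ^ ((8 : ℝ)/3) := by
    rw [hνm2, hνm3, hκ'' t, hκ'1 t, hω, en12, A2, hκ83, ← hu]
    rw [show (3:ℝ) * (ν t ^ 3)⁻¹ * deriv ν t * κ t * (c * ((3:ℝ)/2 * u * Real.sinh t))
        = 3 * ((ν t ^ 3)⁻¹ * deriv ν t) * (κ t * (c * ((3:ℝ)/2 * u * Real.sinh t)))
        from by ring, A3]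
    rw [show 9 * (l/4) ^ ((2:ℝ)/3) * (c ^ ((8:ℝ)/3) * u ^ 8)
        = 9 * ((l/4) ^ ((2:ℝ)/3) * c ^ ((8:ℝ)/3)) * u ^ 8 from by ring, hcc]
    rw [hκt, ← hu2, hlc]
    field_simp
    linear_combination (-(36:ℝ)) * hS
  refine ⟨key, ?_⟩
  rw [key]
  have hne : κ t ^ ((8:ℝ)/3) ≠ 0 := (Real.rpow_pos_of_pos hκtpos _).ne'
  field_simp
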